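/- Let d ≥ 1, let U ⊆ ℝ^d be open, and let E be a bounded connected component of ℝ^d \ U. Then there exists a bounded full domain G ⊆ ℝ^d such that E ⊆ G and ∂G ⊆ U. -/

import Mathlib

open Set Metric Bornology

section Helpers

/-- The connected component within a closed set is closed. -/
lemma isClosed_connectedComponentIn' {α : Type*} [TopologicalSpace α] {F : Set α}
    (hF : IsClosed F) (x : α) : IsClosed (connectedComponentIn F x) := by
  by_cases hx : x ∈ F
  · rw [connectedComponentIn_eq_image hx]
    exact hF.isClosedEmbedding_subtypeVal.isClosedMap _ isClosed_connectedComponent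
  · rw [connectedComponentIn_eq_empty hx]; exact isClosed_empty

/-- In a compact T2 space, a connected component disjoint from a closed set can be
separated from it by a clopen set. -/
lemma exists_isClopen_disjoint {α : Type*} [TopologicalSpace α] [T2Space α] [CompactSpace α]
    (x : α) {K : Set α} (hK : IsClosed K) (hdis : Disjoint (connectedComponent x) K) :
    ∃ Z : Set α, IsClopen Z ∧ x ∈ Z ∧ Disjoint Z K := by
  have hcover : K ⊆ ⋃ s : { s : Set α // IsClopen s ∧ x ∈ s }, (↑s : Set α)ᶜ := by
    intro y hy
    by_contra h
    simp only [mem_iUnion, mem_compl_iff, not_exists, not_not] at h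
    have hy' : y ∈ connectedComponent x := by
      rw [connectedComponent_eq_iInter_isClopen x]
      exact mem_iInter.2 fun s => h s
    exact Set.disjoint_left.mp hdis hy' hy
  obtain ⟨t, ht⟩ := hK.isCompact.elim_finite_subcover
    (fun s : { s : Set α // IsClopen s ∧ x ∈ s } => (↑s : Set α)ᶜ)
    (fun s => s.2.1.1.isOpen_compl) hcover
  refine ⟨⋂ s ∈ t, (↑s : Set α), isClopen_biInter_finset fun s _ => s.2.1, ?_, ?_⟩
  · exact mem_iInter₂.2 fun s _ => s.2.2
  · rw [Set.disjoint_left]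
    intro y hy hyK
    obtain ⟨s, hst, hs⟩ := mem_iUnion₂.mp (ht hyK)
    exact hs (mem_iInter₂.1 hy s hst)

variable {d : ℕ}

/-- A bounded connected component of a closed subset of `ℝ^d` is contained in a compact
set of the form `F ∩ N` with `N` open. -/
lemma exists_compact_clopen_nbhd {F : Set (EuclideanSpace ℝ (Fin d))}
    (hF : IsClosed F) {x : EuclideanSpace ℝ (Fin d)} (hx : x ∈ F)
    (hb : IsBounded (connectedComponentIn F x)) :
    ∃ N : Set (EuclideanSpace ℝ (Fin d)), IsOpen N ∧ IsCompact (F ∩ N) ∧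
      connectedComponentIn F x ⊆ F ∩ N := by
  obtain ⟨R, hR0, hR⟩ := hb.subset_ball_lt 0 0
  set D := connectedComponentIn F x with hD
  set F' : Set (EuclideanSpace ℝ (Fin d)) := F ∩ closedBall 0 R with hF'
  have hF'cpt : IsCompact F' := (isCompact_closedBall (0 : EuclideanSpace ℝ (Fin d)) R).inter_left hF
  have hxD : x ∈ D := mem_connectedComponentIn hx
  have hDF' : D ⊆ F' := fun y hy =>
    ⟨connectedComponentIn_subset F x hy, ball_subset_closedBall (hR hy)⟩
  have hxF' : x ∈ F' := hDF' hxD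
  have hDeq : D = connectedComponentIn F' x := by
    apply Subset.antisymm
    · exact isPreconnected_connectedComponentIn.subset_connectedComponentIn hxD hDF'
    · exact isPreconnected_connectedComponentIn.subset_connectedComponentIn
        (mem_connectedComponentIn hxF') ((connectedComponentIn_subset F' x).trans inter_subset_left)
  haveI : CompactSpace F' := isCompact_iff_compactSpace.mp hF'cpt
  set p : F' := ⟨x, hxF'⟩ with hp
  set K : Set F' := Subtype.val ⁻¹' (sphere (0 : EuclideanSpace ℝ (Fin d)) R) with hKdef
  have hKcl : IsClosed K := isClosed_sphere.preimage continuous_subtype_val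
  have himg : Subtype.val '' connectedComponent p = D := by
    rw [hDeq, connectedComponentIn_eq_image hxF']
  have hdisj : Disjoint (connectedComponent p) K := by
    rw [Set.disjoint_left]
    intro q hq hqK
    have hq' : (q : EuclideanSpace ℝ (Fin d)) ∈ D := himg ▸ mem_image_of_mem _ hq
    have h1 : dist (q : EuclideanSpace ℝ (Fin d)) 0 < R := hR hq'
    have h2 : dist (q : EuclideanSpace ℝ (Fin d)) 0 = R := hqK
    linarith
  obtain ⟨Z, hZ, hpZ, hZK⟩ := exists_isClopen_disjoint p hKcl hdisj
  set A : Set (EuclideanSpace ℝ (Fin d)) := Subtype.val '' Z with hA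
  have hAcpt : IsCompact A :=
    (hZ.1.isCompact).image continuous_subtype_val
  have hAF' : A ⊆ F' := by rintro a ⟨q, _, rfl⟩; exact q.2
  have hAball : A ⊆ ball 0 R := by
    rintro a ⟨q, hqZ, rfl⟩
    have h1 : dist (q : EuclideanSpace ℝ (Fin d)) 0 ≤ R := (hAF' ⟨q, hqZ, rfl⟩).2
    have h2 : dist (q : EuclideanSpace ℝ (Fin d)) 0 ≠ R := by
      intro h
      exact Set.disjoint_left.mp hZK hqZ h
    exact mem_ball.2 (lt_of_le_of_ne h1 h2)
  obtain ⟨O, hOopen, hOZ⟩ := isOpen_induced_iff.mp hZ.2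
  refine ⟨O ∩ ball 0 R, hOopen.inter isOpen_ball, ?_, ?_⟩
  · have : F ∩ (O ∩ ball 0 R) = A := by
      apply Subset.antisymm
      · rintro z ⟨hzF, hzO, hzb⟩
        have hzF' : z ∈ F' := ⟨hzF, ball_subset_closedBall hzb⟩
        exact ⟨⟨z, hzF'⟩, by rw [← hOZ]; exact hzO, rfl⟩
      · rintro a ⟨q, hqZ, rfl⟩
        refine ⟨q.2.1, ?_, hAball ⟨q, hqZ, rfl⟩⟩
        have := hOZ ▸ hqZ
        exact this
    rw [this]; exact hAcpt
  · have hsub : D ⊆ A := by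
      rw [← himg]
      exact image_mono (hZ.connectedComponent_subset hpZ)
    intro y hy
    have hyA : y ∈ A := hsub hy
    obtain ⟨q, hqZ, rfl⟩ := hyA
    refine ⟨q.2.1, ?_, hAball ⟨q, hqZ, rfl⟩⟩
    have := hOZ ▸ hqZ
    exact this

/-- If `A = F ∩ N` is compact with `N` open and `F` closed, then connected components
of points of `A` within `F` stay in `A`. -/
lemma connectedComponentIn_subset_of_compact_open {α : Type*} [TopologicalSpace α] [T2Space α] [NormalSpace α]
    {F N : Set α} (hF : IsClosed F) (hN : IsOpen N) (hA : IsCompact (F ∩ N))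
    {y : α} (hy : y ∈ F ∩ N) : connectedComponentIn F y ⊆ F ∩ N := by
  set A := F ∩ N with hAdef
  have hAcl : IsClosed A := hA.isClosed
  have hFA : IsClosed (F \ A) := by
    have : F \ A = F ∩ Nᶜ := by
      ext z; simp only [hAdef, mem_diff, mem_inter_iff, mem_compl_iff]; tauto
    rw [this]
    exact hF.inter hN.isClosed_compl
  obtain ⟨u, v, hu, hv, hAu, hFAv, huv⟩ :=
    NormalSpace.normal A (F \ A) hAcl hFA disjoint_sdiff_self_right
  have hFuv : F ⊆ u ∪ v := by
    intro z hz
    by_cases hzA : z ∈ A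
    · exact Or.inl (hAu hzA)
    · exact Or.inr (hFAv ⟨hz, hzA⟩)
  have hsub : connectedComponentIn F y ⊆ u :=
    isPreconnected_connectedComponentIn.subset_left_of_subset_union hu hv huv
      ((connectedComponentIn_subset F y).trans hFuv)
      ⟨y, mem_connectedComponentIn hy.1, hAu hy⟩
  intro z hz
  have hzF : z ∈ F := connectedComponentIn_subset F y hz
  by_contra hzA
  exact Set.disjoint_left.mp huv (hsub hz) (hFAv ⟨hzF, hzA⟩)

/-- Points far away from a set bounded in `ball 0 R` have unbounded component in the complement. -/
lemma unbounded_component_of_far {C : Set (EuclideanSpace ℝ (Fin d))} {R : ℝ} (hR0 : 0 < R)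
    (hCR : C ⊆ ball 0 R) {x : EuclideanSpace ℝ (Fin d)} (hx : R ≤ ‖x‖) :
    ¬ IsBounded (connectedComponentIn Cᶜ x) := by
  have hxpos : 0 < ‖x‖ := lt_of_lt_of_le hR0 hx
  set ray : Set (EuclideanSpace ℝ (Fin d)) := (fun t : ℝ => t • x) '' Ici 1 with hray
  have hxray : x ∈ ray := ⟨1, mem_Ici.mpr le_rfl, one_smul ℝ x⟩
  have hraysub : ray ⊆ Cᶜ := by
    rintro _ ⟨t, ht, rfl⟩
    intro hmem
    have h1 : ‖t • x‖ = t * ‖x‖ := by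
      rw [norm_smul, Real.norm_eq_abs, abs_of_nonneg (le_trans zero_le_one ht)]
    have h2 : ‖t • x‖ < R := mem_ball_zero_iff.mp (hCR hmem)
    have ht' : (1:ℝ) ≤ t := mem_Ici.mp ht
    nlinarith
  have hraycon : IsPreconnected ray :=
    (isPreconnected_Ici).image _ ((continuous_id.smul continuous_const).continuousOn)
  have hraycc : ray ⊆ connectedComponentIn Cᶜ x :=
    hraycon.subset_connectedComponentIn hxray hraysub
  intro hbdd
  obtain ⟨r, hr⟩ := (hbdd.subset hraycc).subset_ball 0
  set t : ℝ := max 1 (r / ‖x‖ + 1) with htdef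
  have htray : t • x ∈ ray := ⟨t, mem_Ici.mpr (le_max_left _ _), rfl⟩
  have h1 : ‖t • x‖ = t * ‖x‖ := by
    rw [norm_smul, Real.norm_eq_abs, abs_of_nonneg (le_trans zero_le_one (le_max_left _ _))]
  have h2 : ‖t • x‖ < r := mem_ball_zero_iff.mp (hr htray)
  have h3 : r / ‖x‖ + 1 ≤ t := le_max_right _ _
  have h4 : (r / ‖x‖ + 1) * ‖x‖ ≤ t * ‖x‖ := by nlinarith
  have h5 : (r / ‖x‖ + 1) * ‖x‖ = r + ‖x‖ := by field_simp
  nlinarith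

end Helpers

/-- The topological hull `T(G)` of a set `G ⊆ ℝ^d`: the union of `G` with the
bounded connected components of the complement `ℝ^d \ G`. -/
def topHull {d : ℕ} (G : Set (EuclideanSpace ℝ (Fin d))) : Set (EuclideanSpace ℝ (Fin d)) :=
  G ∪ {x | x ∈ Gᶜ ∧ Bornology.IsBounded (connectedComponentIn Gᶜ x)}

section TopHull

variable {d : ℕ} {C : Set (EuclideanSpace ℝ (Fin d))}

lemma compl_topHull :
    (topHull C)ᶜ = {x | x ∈ Cᶜ ∧ ¬ IsBounded (connectedComponentIn Cᶜ x)} := by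
  ext x
  simp only [topHull, mem_compl_iff, mem_union, mem_setOf_eq, not_or, not_and]
  constructor
  · rintro ⟨h1, h2⟩; exact ⟨h1, h2 h1⟩
  · rintro ⟨h1, h2⟩; exact ⟨h1, fun _ => h2⟩

lemma compl_topHull_mem {x : EuclideanSpace ℝ (Fin d)} (hx : x ∈ (topHull C)ᶜ) :
    x ∈ Cᶜ ∧ ¬ IsBounded (connectedComponentIn Cᶜ x) := by
  rwa [compl_topHull] at hx

lemma mem_topHull_of_bounded {x : EuclideanSpace ℝ (Fin d)} (hx : x ∈ Cᶜ)
    (hb : IsBounded (connectedComponentIn Cᶜ x)) : x ∈ topHull C :=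
  Or.inr ⟨hx, hb⟩

/-- The complement of the hull is a union of components of `Cᶜ`. -/
lemma compl_topHull_absorbs {x : EuclideanSpace ℝ (Fin d)} (hx : x ∈ (topHull C)ᶜ) :
    connectedComponentIn Cᶜ x ⊆ (topHull C)ᶜ := by
  obtain ⟨hxc, hub⟩ := compl_topHull_mem hx
  intro z hz
  rw [compl_topHull]
  refine ⟨connectedComponentIn_subset _ _ hz, ?_⟩
  rwa [connectedComponentIn_eq hz] at hub

lemma topHull_subset_ball {R : ℝ} (hR0 : 0 < R) (hCR : C ⊆ ball 0 R) :
    topHull C ⊆ ball 0 R := by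
  rintro x (hx | ⟨hxc, hb⟩)
  · exact hCR hx
  · by_contra h
    exact unbounded_component_of_far hR0 hCR (le_of_not_gt (fun hlt => h (mem_ball_zero_iff.mpr hlt))) hb

lemma isOpen_topHull (hC : IsOpen C) : IsOpen (topHull C) := by
  rw [← isClosed_compl_iff]
  rw [← closure_eq_iff_isClosed]
  apply Subset.antisymm _ subset_closure
  intro x hx
  have hxc : x ∈ Cᶜ := by
    have : closure (topHull C)ᶜ ⊆ closure Cᶜ := closure_mono (by rw [compl_topHull]; exact fun z hz => hz.1)
    exact hC.isClosed_compl.closure_eq ▸ this hx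
  rw [compl_topHull]
  refine ⟨hxc, fun hb => ?_⟩
  obtain ⟨N, hNopen, hAcpt, hsub⟩ := exists_compact_clopen_nbhd hC.isClosed_compl hxc hb
  have hxN : x ∈ N := (hsub (mem_connectedComponentIn hxc)).2
  obtain ⟨y, hyN, hyH⟩ := _root_.mem_closure_iff.mp hx N hNopen hxN
  obtain ⟨hyc, hyub⟩ := compl_topHull_mem hyH
  have hyA : y ∈ Cᶜ ∩ N := ⟨hyc, hyN⟩
  exact hyub ((hAcpt.isBounded).subset
    (connectedComponentIn_subset_of_compact_open hC.isClosed_compl hNopen hAcpt hyA))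

lemma topHull_idem (hC : IsOpen C) : topHull (topHull C) = topHull C := by
  apply Subset.antisymm
  · rintro x (hx | ⟨hxc, hb⟩)
    · exact hx
    · -- show: impossible, i.e. x ∈ topHull C anyway
      by_contra hxH
      have hxH' : x ∈ (topHull C)ᶜ := hxH
      obtain ⟨hxcc, hub⟩ := compl_topHull_mem hxH'
      have hKsub : connectedComponentIn Cᶜ x ⊆ (topHull C)ᶜ := compl_topHull_absorbs hxH'
      have : connectedComponentIn Cᶜ x ⊆ connectedComponentIn (topHull C)ᶜ x :=
        isPreconnected_connectedComponentIn.subset_connectedComponentIn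
          (mem_connectedComponentIn hxcc) hKsub
      exact hub (hb.subset this)
  · exact subset_union_left

lemma frontier_topHull_subset (hC : IsOpen C) : frontier (topHull C) ⊆ frontier C := by
  intro x hx
  have hHopen := isOpen_topHull hC
  rw [hHopen.frontier_eq] at hx
  have hxcl : x ∈ closure (topHull C) := hx.1
  have hxnot : x ∉ topHull C := hx.2
  obtain ⟨hxc, hub⟩ := compl_topHull_mem hxnot
  have hxclC : x ∈ closure C := by
    by_contra h
    obtain ⟨r, hr0, hrb⟩ : ∃ r > 0, ball x r ∩ C = ∅ := by
      rw [_root_.mem_closure_iff] at h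
      push_neg at h
      obtain ⟨o, ho, hxo, hoC⟩ := h
      obtain ⟨r, hr0, hrsub⟩ := Metric.isOpen_iff.mp ho x hxo
      refine ⟨r, hr0, Set.eq_empty_of_subset_empty ?_⟩
      rw [← hoC]
      exact inter_subset_inter_left _ hrsub
    have hballc : ball x r ⊆ Cᶜ := fun z hz hzC => by
      rw [← Set.not_nonempty_iff_eq_empty] at hrb; exact hrb ⟨z, hz, hzC⟩
    have hballK : ball x r ⊆ connectedComponentIn Cᶜ x :=
      (convex_ball x r).isPreconnected.subset_connectedComponentIn
        (mem_ball_self hr0) hballc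
    have hballH : ball x r ⊆ (topHull C)ᶜ :=
      hballK.trans (compl_topHull_absorbs hxnot)
    obtain ⟨y, hy1, hy2⟩ := _root_.mem_closure_iff.mp hxcl (ball x r) isOpen_ball (mem_ball_self hr0)
    exact hballH hy1 hy2
  exact ⟨hxclC, by rwa [hC.interior_eq]⟩

lemma frontier_connectedComponentIn_subset {G : Set (EuclideanSpace ℝ (Fin d))}
    (hG : IsOpen G) (x : EuclideanSpace ℝ (Fin d)) :
    frontier (connectedComponentIn G x) ⊆ frontier G := by
  intro z hz
  have hCopen : IsOpen (connectedComponentIn G x) := hG.connectedComponentIn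
  rw [hCopen.frontier_eq] at hz
  have hzcl : z ∈ closure (connectedComponentIn G x) := hz.1
  have hznot : z ∉ connectedComponentIn G x := hz.2
  refine ⟨closure_mono (connectedComponentIn_subset G x) hzcl, ?_⟩
  rw [hG.interior_eq]
  intro hzG
  obtain ⟨w, hw1, hw2⟩ := _root_.mem_closure_iff.mp hzcl (connectedComponentIn G z)
    (hG.connectedComponentIn) (mem_connectedComponentIn hzG)
  have : connectedComponentIn G z = connectedComponentIn G x :=
    (connectedComponentIn_eq hw1).trans (connectedComponentIn_eq hw2).symm
  exact hznot (by rw [← this]; exact mem_connectedComponentIn hzG)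

lemma isConnected_topHull (hd : 1 ≤ d) (hC : IsOpen C) (hconn : IsConnected C)
    (hbdd : IsBounded C) : IsConnected (topHull C) := by
  haveI : Nonempty (Fin d) := ⟨⟨0, hd⟩⟩
  obtain ⟨x₀, hx₀C⟩ := hconn.nonempty
  have hx₀H : x₀ ∈ topHull C := Or.inl hx₀C
  have hHopen := isOpen_topHull hC
  have hCH : C ⊆ topHull C := subset_union_left
  suffices h : ∀ y ∈ topHull C, y ∈ connectedComponentIn (topHull C) x₀ by
    have : topHull C = connectedComponentIn (topHull C) x₀ :=
      Subset.antisymm h (connectedComponentIn_subset _ _)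
    rw [this]
    exact isConnected_connectedComponentIn_iff.mpr hx₀H
  intro y hyH
  by_cases hVC : (connectedComponentIn (topHull C) y ∩ C).Nonempty
  · obtain ⟨z, hzV, hzC⟩ := hVC
    have h1 : connectedComponentIn (topHull C) y = connectedComponentIn (topHull C) z :=
      connectedComponentIn_eq hzV
    have h2 : C ⊆ connectedComponentIn (topHull C) z :=
      hconn.isPreconnected.subset_connectedComponentIn hzC hCH
    have hx₀V : x₀ ∈ connectedComponentIn (topHull C) y := by rw [h1]; exact h2 hx₀C
    rw [← connectedComponentIn_eq hx₀V]
    exact mem_connectedComponentIn hyH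
  · exfalso
    set V := connectedComponentIn (topHull C) y with hVdef
    have hVsub : V ⊆ Cᶜ := by
      intro z hz
      intro hzC
      exact hVC ⟨z, hz, hzC⟩
    have hyV : y ∈ V := mem_connectedComponentIn hyH
    have hyc : y ∈ Cᶜ := hVsub hyV
    have hyb : IsBounded (connectedComponentIn Cᶜ y) := by
      rcases hyH with hyC | ⟨_, hb⟩
      · exact absurd hyC hyc
      · exact hb
    set D := connectedComponentIn Cᶜ y with hDdef
    have hVD : V ⊆ D :=
      isPreconnected_connectedComponentIn.subset_connectedComponentIn hyV hVsub
    have hDclosed : IsClosed D := isClosed_connectedComponentIn' hC.isClosed_compl y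
    have hVopen : IsOpen V := hHopen.connectedComponentIn
    have hVclosed : IsClosed V := by
      rw [← closure_eq_iff_isClosed]
      apply Subset.antisymm _ subset_closure
      intro z hz
      have hzD : z ∈ D := hDclosed.closure_eq ▸ closure_mono hVD hz
      have hzH : z ∈ topHull C := by
        refine mem_topHull_of_bounded (connectedComponentIn_subset _ _ hzD) ?_
        rw [← connectedComponentIn_eq hzD]
        exact hyb
      obtain ⟨w, hw1, hw2⟩ := _root_.mem_closure_iff.mp hz (connectedComponentIn (topHull C) z)
        (hHopen.connectedComponentIn) (mem_connectedComponentIn hzH)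
      rw [hVdef] at hw2
      have : connectedComponentIn (topHull C) z = V := by
        rw [hVdef]
        exact (connectedComponentIn_eq hw1).trans (connectedComponentIn_eq hw2).symm
      rw [← this]
      exact mem_connectedComponentIn hzH
    have hclop : IsClopen V := ⟨hVclosed, hVopen⟩
    have hVuniv : V = univ := hclop.eq_univ ⟨y, hyV⟩
    have : IsBounded (univ : Set (EuclideanSpace ℝ (Fin d))) :=
      hyb.subset (hVuniv ▸ hVD)
    exact NormedSpace.unbounded_univ ℝ (EuclideanSpace ℝ (Fin d)) this

end TopHull

/-- Let `d ≥ 1`, let `U ⊆ ℝ^d` be open, and let `E` be a bounded connected component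
of `ℝ^d \ U`. Then there is a bounded full domain `G` with `E ⊆ G` and `∂G ⊆ U`. -/
theorem exists_bounded_full_domain_around_component {d : ℕ} (hd : 1 ≤ d)
    (U : Set (EuclideanSpace ℝ (Fin d))) (hUopen : IsOpen U)
    (E : Set (EuclideanSpace ℝ (Fin d))) (x₀ : EuclideanSpace ℝ (Fin d))
    (hx₀ : x₀ ∈ Uᶜ) (hE : E = connectedComponentIn Uᶜ x₀)
    (hEbdd : Bornology.IsBounded E) :
    ∃ G : Set (EuclideanSpace ℝ (Fin d)),
      IsOpen G ∧ IsConnected G ∧ Bornology.IsBounded G ∧ topHull G = G ∧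
        E ⊆ G ∧ frontier G ⊆ U := by
  have hF : IsClosed (Uᶜ) := hUopen.isClosed_compl
  have hEbdd' : IsBounded (connectedComponentIn Uᶜ x₀) := hE ▸ hEbdd
  obtain ⟨N, hNopen, hAcpt, hEA⟩ := exists_compact_clopen_nbhd hF hx₀ hEbdd'
  set A := Uᶜ ∩ N with hAdef
  have hFAclosed : IsClosed (Uᶜ \ A) := by
    have : Uᶜ \ A = Uᶜ ∩ Nᶜ := by
      ext z; simp only [hAdef, mem_diff, mem_inter_iff, mem_compl_iff]; tauto
    rw [this]; exact hF.inter hNopen.isClosed_compl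
  have hAopen_sub : A ⊆ (Uᶜ \ A)ᶜ := fun z hz h => h.2 hz
  obtain ⟨δ, hδ0, hδ⟩ := hAcpt.exists_cthickening_subset_open hFAclosed.isOpen_compl hAopen_sub
  set G' := thickening δ A with hG'def
  have hG'open : IsOpen G' := isOpen_thickening
  have hG'bdd : IsBounded G' := hAcpt.isBounded.thickening
  have hAG' : A ⊆ G' := self_subset_thickening hδ0 A
  have hfrontG' : frontier G' ⊆ U := by
    intro z hz
    have h1 : EMetric.infEdist z A = ENNReal.ofReal δ := frontier_thickening_subset A hz
    have h2 : z ∈ cthickening δ A :=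
      closure_thickening_subset_cthickening δ A hz.1
    have h3 : z ∉ A := by
      intro h
      rw [show EMetric.infEdist z A = 0 from EMetric.infEdist_zero_of_mem h] at h1
      exact (ENNReal.ofReal_pos.mpr hδ0).ne' h1.symm
    by_contra hzU
    exact (hδ h2) ⟨hzU, h3⟩
  have hx₀E : x₀ ∈ E := hE ▸ mem_connectedComponentIn hx₀
  have hx₀G' : x₀ ∈ G' := hAG' (hEA (hE ▸ hx₀E))
  set C := connectedComponentIn G' x₀ with hCdef
  have hCopen : IsOpen C := hG'open.connectedComponentIn
  have hCconn : IsConnected C := isConnected_connectedComponentIn_iff.mpr hx₀G'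
  have hCbdd : IsBounded C := hG'bdd.subset (connectedComponentIn_subset _ _)
  have hEC : E ⊆ C := by
    have hEpre : IsPreconnected E := hE ▸ isPreconnected_connectedComponentIn
    exact hEpre.subset_connectedComponentIn hx₀E (fun z hz => hAG' (hEA (hE ▸ hz)))
  have hfrontC : frontier C ⊆ U :=
    (frontier_connectedComponentIn_subset hG'open x₀).trans hfrontG'
  refine ⟨topHull C, isOpen_topHull hCopen, isConnected_topHull hd hCopen hCconn hCbdd,
    ?_, topHull_idem hCopen, hEC.trans subset_union_left,
    (frontier_topHull_subset hCopen).trans hfrontC⟩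
  obtain ⟨R, hR0, hCR⟩ := hCbdd.subset_ball_lt 0 0
  exact (isBounded_ball).subset (topHull_subset_ball hR0 hCR)
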